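/- Let A be a noetherian commutative ring, 𝔞 ⊆ A an ideal, and {M_k}_{k∈ℕ} an 𝔞-adic system of A-modules such that each M_k is a flat A/𝔞^{k+1}-module. Then the inverse limit M̂ := lim_{←k} M_k is a flat A-module. -/

import Mathlib

universe u v w
open Module

theorem uDownSum {α : Type u} [AddCommMonoid α] {ι : Type v} (s : Finset ι)
    (F : ι → ULift.{w} α) : (∑ i ∈ s, F i).down = ∑ i ∈ s, (F i).down :=
  map_sum (AddEquiv.ulift (α := α)).toAddMonoidHom F s

section Transfer
variable (R : Type u) [CommRing R]
abbrev uMod (M : Type v) [AddCommGroup M] [Module R M] : Module (ULift.{w} R) M :=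
  Module.compHom M (ULift.ringEquiv.toRingHom : ULift.{w} R →+* R)
variable (M : Type v) [AddCommGroup M] [Module R M]
theorem flat_uLift_ring [Module.Flat R M] :
    letI := uMod.{u,v,w} R M
    Module.Flat (ULift.{w} R) M := by
  letI := uMod.{u,v,w} R M
  letI : Algebra (ULift.{w} R) R := (ULift.ringEquiv.toRingHom : ULift.{w} R →+* R).toAlgebra
  haveI : @IsScalarTower (ULift.{w} R) R M Algebra.toSMul _ (uMod.{u,v,w} R M).toSMul := by
    constructor; intro c s m; show (c.down * s) • m = c.down • s • m; rw [mul_smul]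
  haveI : @Module.Flat (ULift.{w} R) R _ _ Algebra.toModule := by
    refine Module.Flat.of_linearEquiv (?_ : R ≃ₗ[ULift.{w} R] ULift.{w} R)
    exact { toFun := ULift.up, invFun := ULift.down, left_inv := fun _ => rfl,
            right_inv := fun _ => rfl, map_add' := fun _ _ => rfl,
            map_smul' := fun c x => by apply ULift.down_injective; rfl }
  exact Module.Flat.trans (ULift.{w} R) R M
theorem flat_of_uLift_ring
    (h : letI := uMod.{u,v,w} R M; Module.Flat (ULift.{w} R) M) : Module.Flat R M := by
  letI := uMod.{u,v,w} R M
  haveI : @IsScalarTower R (ULift.{w} R) M _ (uMod.{u,v,w} R M).toSMul _ := by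
    constructor; intro r c m; show (r * c.down) • m = r • c.down • m; rw [mul_smul]
  haveI : Module.Flat (ULift.{w} R) M := h
  exact Module.Flat.trans R (ULift.{w} R) M
end Transfer

section W2
variable {R : Type u} [CommRing R] {M : Type v} [AddCommGroup M] [Module R M]

/-- W2: matrix version of the equational criterion, flat direction, universe polymorphic. -/
theorem flat_matrix_factor [Module.Flat R M] {m r : ℕ} (k : Fin m → Fin r → R) (d : Fin m → M)
    (hd : ∀ i, ∑ j, k j i • d j = 0) :
    ∃ (s : ℕ) (β : Fin m → Fin s → R) (y : Fin s → M),
      (∀ j, d j = ∑ w, β j w • y w) ∧ ∀ i w, ∑ j, k j i * β j w = 0 := by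
  letI := uMod.{u, max u v, v} R (ULift.{u} M)
  haveI hF : Module.Flat (ULift.{v} R) (ULift.{u} M) := flat_uLift_ring R (ULift.{u} M)
  set R' := ULift.{v} R with hR'
  set M' := ULift.{u} M with hM'
  have hsm : ∀ (c : R') (z : M'), c • z = ULift.up (c.down • z.down) := fun c z => rfl
  let fK : (Fin r → R') →ₗ[R'] (Fin m → R') :=
    { toFun := fun v j => ∑ i, ULift.up (k j i) * v i
      map_add' := by
        intro v v'; funext j
        simp [Pi.add_apply, mul_add, Finset.sum_add_distrib]
      map_smul' := by
        intro c v; funext j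
        simp only [Pi.smul_apply, smul_eq_mul, RingHom.id_apply, Finset.mul_sum]
        rw [Finset.mul_sum]
        exact Finset.sum_congr rfl fun i _ => by ring }
  let xh : (Fin m → R') →ₗ[R'] M' :=
    { toFun := fun wv => ULift.up (∑ j, (wv j).down • d j)
      map_add' := by
        intro wv wv'; apply ULift.down_injective
        show ∑ x, (wv x + wv' x).down • d x
            = (∑ j, (wv j).down • d j) + ∑ j, (wv' j).down • d j
        rw [← Finset.sum_add_distrib]
        refine Finset.sum_congr rfl fun x _ => ?_
        show ((wv x).down + (wv' x).down) • d x = _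
        rw [add_smul]
      map_smul' := by
        intro c wv; apply ULift.down_injective
        simp only [RingHom.id_apply]
        erw [hsm]
        show ∑ j, ((c • wv) j).down • d j = c.down • ∑ j, (wv j).down • d j
        rw [Finset.smul_sum]
        refine Finset.sum_congr rfl fun j _ => ?_
        show (c * wv j).down • d j = _
        rw [ULift.mul_down, mul_smul] }
  have hxh_apply : ∀ wv, (xh wv).down = ∑ j, (wv j).down • d j := fun _ => rfl
  have hcomp : xh ∘ₗ fK = 0 := by
    apply LinearMap.ext; intro v
    apply ULift.down_injective
    show (xh (fK v)).down = (0 : M').down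
    rw [hxh_apply]
    have hfKj : ∀ j, ((fK v) j).down = ∑ i, k j i * (v i).down := by
      intro j
      show (∑ i, ULift.up (k j i) * v i).down = _
      rw [uDownSum]
      exact Finset.sum_congr rfl fun i _ => rfl
    calc ∑ j, ((fK v) j).down • d j
        = ∑ j, ∑ i, (k j i * (v i).down) • d j := by
          refine Finset.sum_congr rfl fun j _ => ?_
          rw [hfKj, Finset.sum_smul]
      _ = ∑ i, ∑ j, (k j i * (v i).down) • d j := Finset.sum_comm
      _ = ∑ i, (v i).down • ∑ j, k j i • d j := by
          refine Finset.sum_congr rfl fun i _ => ?_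
          rw [Finset.smul_sum]
          exact Finset.sum_congr rfl fun j _ => by rw [mul_comm, mul_smul]
      _ = (0 : M').down := by
          simp [hd]
  obtain ⟨κ, hκ, a, y', hxy, haf⟩ : ∃ (κ : Type) (_ : Fintype κ)
      (a : (Fin m → R') →ₗ[R'] (κ →₀ R')) (y' : (κ →₀ R') →ₗ[R'] M'),
      xh = y' ∘ₗ a ∧ a ∘ₗ fK = 0 := by
    obtain ⟨n, a, y', hxy, haf⟩ :=
      Module.Flat.exists_factorization_of_comp_eq_zero_of_free (R := R') (M := M')
        (f := fK) (x := xh) hcomp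
    exact ⟨Fin n, inferInstance, a, y', hxy, haf⟩
  let e : Fin (Fintype.card κ) ≃ κ := (Fintype.equivFin κ).symm
  have hy' : ∀ g : κ →₀ R', (y' g).down
      = ∑ c : κ, (g c).down • (y' (Finsupp.single c 1)).down := by
    intro g
    have hg : g = ∑ c : κ, Finsupp.single c (g c) := by
      ext c'
      rw [Finsupp.finset_sum_apply, Finset.sum_eq_single c']
      · simp
      · intro b _ hb; exact Finsupp.single_eq_of_ne hb.symm
      · intro h; exact absurd (Finset.mem_univ c') h
    calc (y' g).down = (∑ c : κ, y' (Finsupp.single c (g c))).down := by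
          conv_lhs => rw [hg]
          rw [map_sum]
      _ = ∑ c : κ, (y' (Finsupp.single c (g c))).down := uDownSum _ _
      _ = ∑ c : κ, (g c).down • (y' (Finsupp.single c 1)).down := by
          refine Finset.sum_congr rfl fun c _ => ?_
          have h1 : Finsupp.single c (g c) = g c • Finsupp.single c (1 : R') := by
            rw [Finsupp.smul_single, smul_eq_mul, mul_one]
          rw [h1, map_smul, hsm]
  -- delta basis vectors
  have hdelta : ∀ {t : ℕ} (L : (Fin t → R') →ₗ[R'] (κ →₀ R')) (vv : Fin t → R'),
      L vv = ∑ i, vv i • L (fun j => if i = j then 1 else 0) :=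
    fun L vv => LinearMap.pi_apply_eq_sum_univ L vv
  refine ⟨Fintype.card κ, fun j w => (a (fun j' => if j = j' then 1 else 0) (e w)).down,
    fun w => (y' (Finsupp.single (e w) 1)).down, ?_, ?_⟩
  · intro j
    have h1 : d j = (xh (fun j' => if j = j' then 1 else 0)).down := by
      rw [hxh_apply]
      have : ∀ j', ((if j = j' then (1:R') else 0)).down • d j'
          = if j = j' then d j' else 0 := by
        intro j'
        by_cases h : j = j' <;> simp [h]
      simp only [this]
      rw [Finset.sum_ite_eq]
      simp
    rw [h1, hxy]
    show (y' (a _)).down = _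
    rw [hy']
    exact (Equiv.sum_comp e fun c => (a (fun j' => if j = j' then (1:R') else 0) c).down •
      (y' (Finsupp.single c 1)).down).symm
  · intro i w
    have h0 : a (fK (fun i' => if i = i' then 1 else 0)) = 0 := by
      have := LinearMap.congr_fun haf (fun i' => if i = i' then (1:R') else 0)
      simpa using this
    have hcol : fK (fun i' => if i = i' then (1:R') else 0) = fun j => ULift.up (k j i) := by
      funext j
      show ∑ i', ULift.up (k j i') * (if i = i' then (1:R') else 0) = _
      simp [mul_ite, mul_one, mul_zero, Finset.sum_ite_eq]
    have hexp : (0 : κ →₀ R') = ∑ j, ULift.up (k j i) • a (fun j' => if j = j' then 1 else 0) := by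
      rw [← h0, hcol, hdelta a]
    have := congrArg (fun g : κ →₀ R' => (g (e w)).down) hexp
    simp only [Finsupp.coe_zero, Pi.zero_apply] at this
    rw [Finsupp.finset_sum_apply] at this
    rw [uDownSum] at this
    rw [show ((0:R')).down = (0:R) from rfl] at this
    refine Eq.trans ?_ this.symm
    refine Finset.sum_congr rfl fun j _ => ?_
    rw [Finsupp.smul_apply, smul_eq_mul, ULift.mul_down]
end W2
section W3
variable {R : Type u} [CommRing R] {M : Type v} [AddCommGroup M] [Module R M]

/-- W3: if every (finitely indexed) relation in `M` is trivial, then `M` is flat.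
Universe polymorphic version. -/
theorem flat_of_forall_rel
    (H : ∀ (r : ℕ) (b : Fin r → R) (x : Fin r → M), ∑ i, b i • x i = 0 →
      ∃ (s : ℕ) (a : Fin r → Fin s → R) (y : Fin s → M),
        (∀ i, x i = ∑ j, a i j • y j) ∧ ∀ j, ∑ i, b i * a i j = 0) :
    Module.Flat R M := by
  letI := uMod.{u, max u v, v} R (ULift.{u} M)
  suffices h : Module.Flat (ULift.{v} R) (ULift.{u} M) by
    haveI : Module.Flat R (ULift.{u} M) := flat_of_uLift_ring R (ULift.{u} M) h
    exact Module.Flat.of_ulift (R := R) (M := M)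
  set R' := ULift.{v} R
  set M' := ULift.{u} M
  have hsm : ∀ (c : R') (z : M'), c • z = ULift.up (c.down • z.down) := fun c z => rfl
  refine Module.Flat.of_forall_isTrivialRelation fun {l} {f} {x} h =>
    (?_ : ∀ (ι : Type) [Fintype ι] (f : ι → R') (x : ι → M'), ∑ i, f i • x i = 0 →
      IsTrivialRelation f x) (Fin l) f x h
  intro ι _ fc xv hrel
  set n := Fintype.card ι with hn
  let eι : Fin n ≃ ι := (Fintype.equivFin ι).symm
  have hrel' : ∑ i : Fin n, (fc (eι i)).down • (xv (eι i)).down = 0 := by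
    have h1 : ∑ c : ι, fc c • xv c = 0 := hrel
    have h2 := congrArg ULift.down h1
    rw [uDownSum] at h2
    rw [show ((0:M')).down = (0:M) from rfl] at h2
    rw [← Equiv.sum_comp eι (fun c => (fc c • xv c).down)] at h2
    refine Eq.trans ?_ h2
    refine Finset.sum_congr rfl fun i _ => ?_
    rw [hsm]
  obtain ⟨s, a, y, h1, h2⟩ := H n (fun i => (fc (eι i)).down) (fun i => (xv (eι i)).down) hrel'
  refine ⟨s,
    fun c j => ULift.up (a (eι.symm c) j), fun j => ULift.up (y j), ?_, ?_⟩
  · intro c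
    apply ULift.down_injective
    rw [uDownSum]
    have h3 : ∀ j : Fin s,
        ((ULift.up (a (eι.symm c) j) : R') • (ULift.up (y j) : M')).down
        = a (eι.symm c) j • y j := fun j => by rw [hsm]
    simp only [h3]
    have h4 := h1 (eι.symm c)
    simp only [Equiv.apply_symm_apply] at h4 ⊢
    exact h4
  · intro j
    apply ULift.down_injective
    rw [uDownSum]
    rw [show ((0:R')).down = (0:R) from rfl]
    have h3 : ∀ c : ι, (fc c * ULift.up (a (eι.symm c) j)).down
        = (fc c).down * a (eι.symm c) j := fun c => rfl
    simp only [h3]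
    rw [← Equiv.sum_comp eι (fun c => (fc c).down * a (eι.symm c) j)]
    simp only [Equiv.symm_apply_apply]
    exact h2 j
end W3
section Helpers

/-- Artin–Rees style approximation: if `ψ v` lies deep in the `𝔞`-adic filtration, then `v`
differs from an element of `ker ψ` by an element deep in the filtration of the source. -/
theorem ar_aux {A : Type u} [CommRing A] [IsNoetherianRing A] (𝔞 : Ideal A)
    {P Q : Type u} [AddCommGroup P] [AddCommGroup Q] [Module A P] [Module A Q]
    [Module.Finite A Q] (ψ : P →ₗ[A] Q) :
    ∃ c : ℕ, ∀ (n : ℕ) (v : P), ψ v ∈ (𝔞 ^ (n + c) • ⊤ : Submodule A Q) →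
      ∃ w : P, w ∈ (𝔞 ^ n • ⊤ : Submodule A P) ∧ ψ (v - w) = 0 := by
  obtain ⟨c, hc⟩ := Ideal.exists_pow_inf_eq_pow_smul 𝔞 (LinearMap.range ψ)
  refine ⟨c, fun n v hv => ?_⟩
  have h1 : ψ v ∈ (𝔞 ^ (n + c) • ⊤ ⊓ LinearMap.range ψ : Submodule A Q) :=
    Submodule.mem_inf.mpr ⟨hv, LinearMap.mem_range.mpr ⟨v, rfl⟩⟩
  rw [hc (n + c) (Nat.le_add_left c n)] at h1
  have h2 : ψ v ∈ (𝔞 ^ n • LinearMap.range ψ : Submodule A Q) := by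
    have hle : (𝔞 ^ c • ⊤ ⊓ LinearMap.range ψ : Submodule A Q) ≤ LinearMap.range ψ :=
      inf_le_right
    have := Submodule.smul_mono (le_refl (𝔞 ^ (n + c - c))) hle h1
    rwa [Nat.add_sub_cancel] at this
  rw [← Submodule.map_top, ← Submodule.map_smul''] at h2
  obtain ⟨w, hw, hww⟩ := h2
  exact ⟨w, hw, by rw [map_sub, hww, sub_self]⟩

/-- Membership in `J • ⊤` for finite pi modules is coordinatewise membership. -/
theorem mem_pi_smul_top_iff {A : Type u} [CommRing A] (J : Ideal A) {t : ℕ} (v : Fin t → A) :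
    v ∈ (J • ⊤ : Submodule A (Fin t → A)) ↔ ∀ i, v i ∈ J := by
  constructor
  · intro hv i
    refine Submodule.smul_induction_on hv ?_ ?_
    · intro r hr n _
      exact Ideal.mul_mem_right _ _ hr
    · intro a b ha hb
      exact Ideal.add_mem _ ha hb
  · intro hv
    have hrepr : v = ∑ i, v i • (Pi.single i 1 : Fin t → A) := by
      funext j
      rw [Finset.sum_apply, Finset.sum_eq_single j]
      · simp
      · intro i _ hij
        rw [Pi.smul_apply, Pi.single_eq_of_ne' hij, smul_zero]
      · intro h; exact absurd (Finset.mem_univ j) h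
    rw [hrepr]
    exact Submodule.sum_mem _ fun i _ =>
      Submodule.smul_mem_smul (hv i) Submodule.mem_top

/-- Rearrangement: if each `V w` is congruent, modulo coefficients killing `N`, to an element
of the span of `gen`, then `∑ w, V w i • y w` can be written as `∑ jj, gen jj i • z jj`. -/
theorem rearrange {A : Type u} [CommRing A] {N : Type v} [AddCommGroup N] [Module A N]
    {t m' s : ℕ} (gen : Fin m' → Fin t → A) (V : Fin s → Fin t → A) (y : Fin s → N)
    (J : Ideal A) (hkill : ∀ a ∈ J, ∀ z : N, a • z = 0)
    (hV : ∀ w, ∃ e : Fin t → A, (∀ i, e i ∈ J) ∧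
      V w - e ∈ Submodule.span A (Set.range gen)) :
    ∃ z : Fin m' → N, ∀ i, ∑ w, V w i • y w = ∑ jj, gen jj i • z jj := by
  choose e he hspan using hV
  choose co hco using fun w => (Submodule.mem_span_range_iff_exists_fun A).mp (hspan w)
  refine ⟨fun jj => ∑ w, co w jj • y w, fun i => ?_⟩
  calc ∑ w, V w i • y w
      = ∑ w, ((V w i - e w i) • y w + e w i • y w) := by
        refine Finset.sum_congr rfl fun w _ => ?_
        rw [← add_smul, sub_add_cancel]
    _ = ∑ w, (V w i - e w i) • y w := by
        refine Finset.sum_congr rfl fun w _ => ?_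
        rw [hkill (e w i) (he w i) (y w), add_zero]
    _ = ∑ w, ∑ jj, (co w jj * gen jj i) • y w := by
        refine Finset.sum_congr rfl fun w _ => ?_
        rw [← Finset.sum_smul]
        congr 1
        have := congrFun (hco w) i
        rw [Finset.sum_apply] at this
        simp only [Pi.sub_apply, Pi.smul_apply, smul_eq_mul] at this
        exact this.symm
    _ = ∑ jj, ∑ w, (co w jj * gen jj i) • y w := Finset.sum_comm
    _ = ∑ jj, gen jj i • ∑ w, co w jj • y w := by
        refine Finset.sum_congr rfl fun jj _ => ?_
        rw [Finset.smul_sum]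
        refine Finset.sum_congr rfl fun w _ => ?_
        rw [mul_comm, mul_smul]

section pc
variable {A : Type u} [CommRing A] {M : ℕ → Type v} [∀ k, AddCommGroup (M k)]
  [∀ k, Module A (M k)] (f : ∀ k, M (k + 1) →ₗ[A] M k)

/-- Composite transition maps of the inverse system. -/
def pc : ∀ {p q : ℕ}, p ≤ q → (M q →ₗ[A] M p) := fun h =>
  Nat.leRecOn h (fun {k} g => g ∘ₗ f k) LinearMap.id

theorem pc_refl {p : ℕ} (h : p ≤ p) (z : M p) : pc f h z = z := by
  have := Nat.leRecOn_self (C := fun k => M k →ₗ[A] M p)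
    (next := fun {k} g => g ∘ₗ f k) (LinearMap.id)
  exact DFunLike.congr_fun this z

theorem pc_succ {p q : ℕ} (h : p ≤ q) (h' : p ≤ q + 1) (z : M (q + 1)) :
    pc f h' z = pc f h (f q z) := by
  have := Nat.leRecOn_succ (C := fun k => M k →ₗ[A] M p) h
    (next := fun {k} g => g ∘ₗ f k) (h2 := h') (LinearMap.id)
  exact DFunLike.congr_fun this z

theorem pc_trans {p q s : ℕ} (h1 : p ≤ q) (h2 : q ≤ s) (h : p ≤ s) (z : M s) :
    pc f h z = pc f h1 (pc f h2 z) := by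
  induction s, h2 using Nat.le_induction with
  | base =>
    rw [pc_refl f _ z]
  | succ s hs ih =>
    rw [pc_succ f (h1.trans hs) h z, pc_succ f hs _ z]
    exact ih _ _
  
theorem pc_surj (hsur : ∀ k, Function.Surjective (f k)) {p q : ℕ} (h : p ≤ q) :
    Function.Surjective (pc f h) := by
  induction q, h using Nat.le_induction with
  | base => intro z; exact ⟨z, pc_refl f _ z⟩
  | succ s hs ih =>
    intro z
    obtain ⟨w, hw⟩ := ih z
    obtain ⟨w', hw'⟩ := hsur s w
    exact ⟨w', by rw [pc_succ f hs, hw', hw]⟩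

theorem pc_limit (x : ∀ k, M k) (hx : ∀ k, f k (x (k + 1)) = x k) {p q : ℕ} (h : p ≤ q) :
    pc f h (x q) = x p := by
  induction q, h using Nat.le_induction with
  | base => exact pc_refl f _ _
  | succ s hs ih => rw [pc_succ f hs, hx s, ih]

theorem pc_step {p s : ℕ} (h : p + 1 ≤ s) (z : M s) :
    f p (pc f h z) = pc f ((Nat.le_succ p).trans h) z := by
  rw [pc_trans f (Nat.le_succ p) h ((Nat.le_succ p).trans h) z]
  rw [pc_succ f (le_refl p) (Nat.le_succ p), pc_refl f (le_refl p)]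

end pc
end Helpers

/-- The inverse limit of an inverse system `{M_k}` of modules, realized as a
submodule of the product `∀ k, M k`. -/
def invLimit {A : Type*} [CommRing A] {M : ℕ → Type*}
    [∀ k, AddCommGroup (M k)] [∀ k, Module A (M k)]
    (f : ∀ k, M (k + 1) →ₗ[A] M k) : Submodule A (∀ k, M k) where
  carrier := {x | ∀ k, f k (x (k + 1)) = x k}
  add_mem' hx hy := fun k => by simp [hx k, hy k]
  zero_mem' := fun k => by simp
  smul_mem' c x hx := fun k => by simp [hx k]

/-- Let `A` be a noetherian commutative ring, `𝔞 ⊆ A` an ideal, `A_k := A/𝔞^(k+1)`,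
and let `{M_k}` be a flat `𝔞`-adic system of `A`-modules: each `M_k` is a flat
`A_k`-module, and each transition map `f k : M_(k+1) → M_k` induces a bijection
`A_k ⊗_{A_(k+1)} M_(k+1) → M_k`, i.e. `f k` is surjective with kernel
`𝔞^(k+1) M_(k+1)`.  Then the inverse limit `M̂ := lim_k M_k` is a flat
`A`-module. -/
theorem flat_of_limit_of_flat_adic_system {A : Type*} [CommRing A]
    [IsNoetherianRing A] (𝔞 : Ideal A) {M : ℕ → Type*}
    [∀ k, AddCommGroup (M k)] [∀ k, Module A (M k)]
    [∀ k, Module (A ⧸ 𝔞 ^ (k + 1)) (M k)]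
    [∀ k, IsScalarTower A (A ⧸ 𝔞 ^ (k + 1)) (M k)]
    (hflat : ∀ k, Module.Flat (A ⧸ 𝔞 ^ (k + 1)) (M k))
    (f : ∀ k, M (k + 1) →ₗ[A] M k)
    (hsys : ∀ k, Function.Surjective (f k) ∧
      LinearMap.ker (f k) = 𝔞 ^ (k + 1) • (⊤ : Submodule A (M (k + 1)))) :
    Module.Flat A (invLimit f) := by
  classical
  set N := invLimit f with hNdef
  apply flat_of_forall_rel
  intro r b x hx
  -- scalars in `𝔞 ^ (p+1)` kill `M p`
  have hkill : ∀ (p : ℕ), ∀ a ∈ 𝔞 ^ (p + 1), ∀ z : M p, a • z = 0 := by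
    intro p a ha z
    have h1 : algebraMap A (A ⧸ 𝔞 ^ (p + 1)) a • z = a • z :=
      IsScalarTower.algebraMap_smul (A ⧸ 𝔞 ^ (p + 1)) a z
    rw [← h1, Ideal.Quotient.algebraMap_eq, Ideal.Quotient.eq_zero_iff_mem.mpr ha, zero_smul]
  have hmk : ∀ (p : ℕ) (a : A) (z : M p), (Ideal.Quotient.mk (𝔞 ^ (p + 1)) a) • z = a • z := by
    intro p a z
    rw [← Ideal.Quotient.algebraMap_eq, IsScalarTower.algebraMap_smul]
  -- the dot-product map with b
  let g : (Fin r → A) →ₗ[A] A :=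
    { toFun := fun v => ∑ i, b i * v i
      map_add' := by
        intro v v'; simp [Pi.add_apply, mul_add, Finset.sum_add_distrib]
      map_smul' := by
        intro c v
        simp only [Pi.smul_apply, smul_eq_mul, RingHom.id_apply, Finset.mul_sum]
        exact Finset.sum_congr rfl fun i _ => by ring }
  obtain ⟨m, k, hk⟩ := Submodule.fg_iff_exists_fin_generating_family.mp
    (IsNoetherian.noetherian (LinearMap.ker g))
  -- the matrix map Φ given by k, over A itself
  let Φ : (Fin m → A) →ₗ[A] (Fin r → A) :=
    { toFun := fun z i => ∑ j, k j i * z j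
      map_add' := by
        intro z z'; funext i; simp [Pi.add_apply, mul_add, Finset.sum_add_distrib]
      map_smul' := by
        intro c z; funext i
        simp only [Pi.smul_apply, smul_eq_mul, RingHom.id_apply, Finset.mul_sum]
        exact Finset.sum_congr rfl fun j _ => by ring }
  obtain ⟨q, hgen, hh⟩ := Submodule.fg_iff_exists_fin_generating_family.mp
    (IsNoetherian.noetherian (LinearMap.ker Φ))
  obtain ⟨c₁, hc₁⟩ := ar_aux 𝔞 g
  obtain ⟨c₂, hc₂⟩ := ar_aux 𝔞 Φ
  -- the relation, coordinatewise
  have hxp : ∀ p, ∑ i, b i • (x i : ∀ k, M k) p = 0 := by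
    intro p
    have h1 : ((∑ i, b i • x i : N) : ∀ k, M k) = ∑ i, b i • (x i : ∀ k, M k) := by
      rw [show ((∑ i, b i • x i : N) : ∀ k, M k) = N.subtype (∑ i, b i • x i) from rfl,
        map_sum]
      rfl
    have h2 := congrFun (h1.symm.trans (by rw [hx]; rfl : ((∑ i, b i • x i : N) : ∀ k, M k) = 0)) p
    rw [Finset.sum_apply] at h2
    exact h2
  have hxc : ∀ (i : Fin r) {p p' : ℕ} (h : p ≤ p'),
      pc f h ((x i : ∀ k, M k) p') = (x i : ∀ k, M k) p := by
    intro i p p' h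
    exact pc_limit f _ (x i).2 h
  -- solution sets
  let Sol : ∀ p : ℕ, Set (Fin m → M p) :=
    fun p => {z | ∀ i, ∑ j, k j i • z j = (x i : ∀ k, M k) p}
  -- pushing solutions down
  have solPush : ∀ {p p' : ℕ} (h : p ≤ p') (z : Fin m → M p'), z ∈ Sol p' →
      (fun j => pc f h (z j)) ∈ Sol p := by
    intro p p' h z hz i
    calc ∑ j, k j i • pc f h (z j) = pc f h (∑ j, k j i • z j) := by
          rw [map_sum]
          exact Finset.sum_congr rfl fun j _ => (map_smul _ _ _).symm
      _ = (x i : ∀ k, M k) p := by rw [hz i, hxc i h]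
  -- nonemptiness of solution sets (uses flatness at level p + c₁ and Artin–Rees for g)
  have solNE : ∀ p : ℕ, ∃ z, z ∈ Sol p := by
    intro p
    have hple : p ≤ p + c₁ := Nat.le_add_right p c₁
    haveI := hflat (p + c₁)
    have hrel : ∀ i0 : Fin 1, ∑ i : Fin r,
        (Ideal.Quotient.mk (𝔞 ^ (p + c₁ + 1)) (b i)) • (x i : ∀ k, M k) (p + c₁) = 0 := by
      intro _
      calc ∑ i : Fin r, (Ideal.Quotient.mk (𝔞 ^ (p + c₁ + 1)) (b i)) •
            (x i : ∀ k, M k) (p + c₁)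
          = ∑ i : Fin r, b i • (x i : ∀ k, M k) (p + c₁) :=
            Finset.sum_congr rfl fun i _ => hmk _ _ _
        _ = 0 := hxp _
    obtain ⟨s, β, y, hβ1, hβ2⟩ := flat_matrix_factor (R := A ⧸ 𝔞 ^ (p + c₁ + 1))
      (M := M (p + c₁)) (fun i (_ : Fin 1) => Ideal.Quotient.mk (𝔞 ^ (p + c₁ + 1)) (b i))
      (fun i => (x i : ∀ k, M k) (p + c₁)) hrel
    choose α hα using fun i w => Ideal.Quotient.mk_surjective (I := 𝔞 ^ (p + c₁ + 1)) (β i w)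
    -- Artin–Rees correction of the columns of α
    have hgmem : ∀ w, g (fun i => α i w) ∈ (𝔞 ^ ((p + 1) + c₁) • ⊤ : Submodule A A) := by
      intro w
      have h1 : (Ideal.Quotient.mk (𝔞 ^ (p + c₁ + 1))) (g (fun i => α i w)) = 0 := by
        show (Ideal.Quotient.mk (𝔞 ^ (p + c₁ + 1))) (∑ i, b i * α i w) = 0
        rw [map_sum]
        calc ∑ i, (Ideal.Quotient.mk (𝔞 ^ (p + c₁ + 1))) (b i * α i w)
            = ∑ i, (Ideal.Quotient.mk (𝔞 ^ (p + c₁ + 1))) (b i) * β i w := by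
              refine Finset.sum_congr rfl fun i _ => ?_
              rw [map_mul, hα i w]
          _ = 0 := hβ2 0 w
      have h2 : g (fun i => α i w) ∈ 𝔞 ^ (p + c₁ + 1) := Ideal.Quotient.eq_zero_iff_mem.mp h1
      have h3 : g (fun i => α i w) ∈ 𝔞 ^ ((p + 1) + c₁) := by
        rwa [show (p + 1) + c₁ = p + c₁ + 1 by omega]
      have h4 := Submodule.smul_mem_smul h3 (Submodule.mem_top (x := (1 : A)))
      simpa using h4
    choose W hW hWker using fun w => hc₁ (p + 1) (fun i => α i w) (hgmem w)
    -- push the factorization down to level p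
    have hpush : ∀ i, (x i : ∀ k, M k) p = ∑ w, α i w • pc f hple (y w) := by
      intro i
      calc (x i : ∀ k, M k) p = pc f hple ((x i : ∀ k, M k) (p + c₁)) := (hxc i hple).symm
        _ = pc f hple (∑ w, α i w • y w) := by
            rw [hβ1 i]
            congr 1
            exact Finset.sum_congr rfl fun w _ => by rw [← hα i w, hmk]
        _ = ∑ w, α i w • pc f hple (y w) := by
            rw [map_sum]
            exact Finset.sum_congr rfl fun w _ => map_smul _ _ _
    obtain ⟨z, hz⟩ := rearrange k (fun w i => α i w) (fun w => pc f hple (y w))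
      (𝔞 ^ (p + 1)) (hkill p) (fun w => ⟨W w, (mem_pi_smul_top_iff _ _).mp (hW w), by
        rw [hk]
        exact LinearMap.mem_ker.mpr (hWker w)⟩)
    exact ⟨z, fun i => by rw [← hz i, hpush i]⟩
  -- stability: homogeneous solutions at level p + c₂ map into Ψ-images at level p
  have stab : ∀ (p : ℕ) (dd : Fin m → M (p + c₂)), (∀ i, ∑ j, k j i • dd j = 0) →
      ∃ u : Fin q → M p, ∀ j, pc f (Nat.le_add_right p c₂) (dd j)
        = ∑ w, hgen w j • u w := by
    intro p dd hdd
    have hple : p ≤ p + c₂ := Nat.le_add_right p c₂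
    haveI := hflat (p + c₂)
    have hdd' : ∀ i, ∑ j, (Ideal.Quotient.mk (𝔞 ^ (p + c₂ + 1)) (k j i)) • dd j = 0 := by
      intro i
      calc ∑ j, (Ideal.Quotient.mk (𝔞 ^ (p + c₂ + 1)) (k j i)) • dd j
          = ∑ j, k j i • dd j := Finset.sum_congr rfl fun j _ => hmk _ _ _
        _ = 0 := hdd i
    obtain ⟨s, β, y, hβ1, hβ2⟩ := flat_matrix_factor (R := A ⧸ 𝔞 ^ (p + c₂ + 1))
      (M := M (p + c₂)) (fun j i => Ideal.Quotient.mk (𝔞 ^ (p + c₂ + 1)) (k j i)) dd hdd'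
    choose α hα using fun j w => Ideal.Quotient.mk_surjective (I := 𝔞 ^ (p + c₂ + 1)) (β j w)
    have hΦmem : ∀ w, Φ (fun j => α j w)
        ∈ (𝔞 ^ ((p + 1) + c₂) • ⊤ : Submodule A (Fin r → A)) := by
      intro w
      rw [mem_pi_smul_top_iff]
      intro i
      have h1 : (Ideal.Quotient.mk (𝔞 ^ (p + c₂ + 1))) (Φ (fun j => α j w) i) = 0 := by
        show (Ideal.Quotient.mk (𝔞 ^ (p + c₂ + 1))) (∑ j, k j i * α j w) = 0
        rw [map_sum]
        calc ∑ j, (Ideal.Quotient.mk (𝔞 ^ (p + c₂ + 1))) (k j i * α j w)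
            = ∑ j, (Ideal.Quotient.mk (𝔞 ^ (p + c₂ + 1))) (k j i) * β j w := by
              refine Finset.sum_congr rfl fun j _ => ?_
              rw [map_mul, hα j w]
          _ = 0 := hβ2 i w
      have h2 := Ideal.Quotient.eq_zero_iff_mem.mp h1
      rwa [show (p + 1) + c₂ = p + c₂ + 1 by omega]
    choose W hW hWker using fun w => hc₂ (p + 1) (fun j => α j w) (hΦmem w)
    have hpush : ∀ j, pc f hple (dd j) = ∑ w, α j w • pc f hple (y w) := by
      intro j
      calc pc f hple (dd j) = pc f hple (∑ w, α j w • y w) := by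
            rw [hβ1 j]
            congr 1
            exact Finset.sum_congr rfl fun w _ => by rw [← hα j w, hmk]
        _ = ∑ w, α j w • pc f hple (y w) := by
            rw [map_sum]
            exact Finset.sum_congr rfl fun w _ => map_smul _ _ _
    obtain ⟨u, hu⟩ := rearrange hgen (fun w j => α j w) (fun w => pc f hple (y w))
      (𝔞 ^ (p + 1)) (hkill p) (fun w => ⟨W w, (mem_pi_smul_top_iff _ _).mp (hW w), by
        rw [hh]
        exact LinearMap.mem_ker.mpr (hWker w)⟩)
    exact ⟨u, fun j => by rw [hpush j, hu j]⟩
  -- Ψ-images are homogeneous solutions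
  have hET : ∀ (p : ℕ) (u : Fin q → M p) (i : Fin r),
      ∑ j, k j i • (∑ w, hgen w j • u w) = 0 := by
    intro p u i
    have hΦ0 : ∀ w, ∑ j, k j i * hgen w j = 0 := by
      intro w
      have h1 : hgen w ∈ LinearMap.ker Φ := by
        rw [← hh]
        exact Submodule.subset_span (Set.mem_range_self w)
      have h2 : Φ (hgen w) = 0 := LinearMap.mem_ker.mp h1
      exact congrFun h2 i
    calc ∑ j, k j i • (∑ w, hgen w j • u w)
        = ∑ j, ∑ w, (k j i * hgen w j) • u w := by
          refine Finset.sum_congr rfl fun j _ => ?_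
          rw [Finset.smul_sum]
          exact Finset.sum_congr rfl fun w _ => by rw [mul_smul]
      _ = ∑ w, ∑ j, (k j i * hgen w j) • u w := Finset.sum_comm
      _ = ∑ w, (∑ j, k j i * hgen w j) • u w := by
          refine Finset.sum_congr rfl fun w _ => ?_
          rw [Finset.sum_smul]
      _ = 0 := by
          simp [hΦ0]
  -- the "good" solution sets: solutions which come from c₂ levels higher
  let Good : ∀ p : ℕ, Set (Fin m → M p) :=
    fun p => {z | ∃ t ∈ Sol (p + c₂), (fun j => pc f (Nat.le_add_right p c₂) (t j)) = z}
  have goodSol : ∀ (p : ℕ) (z : Fin m → M p), z ∈ Good p → z ∈ Sol p := by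
    rintro p z ⟨t, ht, rfl⟩
    exact solPush _ t ht
  have goodNE : ∀ p : ℕ, ∃ z, z ∈ Good p := by
    intro p
    obtain ⟨t, ht⟩ := solNE (p + c₂)
    exact ⟨_, t, ht, rfl⟩
  have goodStep : ∀ (p : ℕ) (z : Fin m → M p), z ∈ Good p →
      ∃ z', z' ∈ Good (p + 1) ∧ ∀ j, f p (z' j) = z j := by
    rintro p z ⟨t, ht, htz⟩
    obtain ⟨u, hu⟩ := solNE (p + 1 + c₂)
    have h1 : p + c₂ ≤ p + 1 + c₂ := by omega
    have h2 : p ≤ p + c₂ := Nat.le_add_right p c₂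
    have h3 : p ≤ p + 1 + c₂ := by omega
    have h5 : p + 1 ≤ p + 1 + c₂ := Nat.le_add_right (p + 1) c₂
    -- the defect
    set ub : Fin m → M (p + c₂) := fun j => pc f h1 (u j) with hubdef
    have hub : ub ∈ Sol (p + c₂) := solPush h1 u hu
    have hdd : ∀ i, ∑ j, k j i • (t j - ub j) = 0 := by
      intro i
      calc ∑ j, k j i • (t j - ub j)
          = (∑ j, k j i • t j) - ∑ j, k j i • ub j := by
            rw [← Finset.sum_sub_distrib]
            exact Finset.sum_congr rfl fun j _ => smul_sub _ _ _
        _ = 0 := by rw [ht i, hub i, sub_self]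
    obtain ⟨u0, hu0⟩ := stab p (fun j => t j - ub j) hdd
    choose u1 hu1 using fun w => pc_surj f (fun kk => (hsys kk).1) h3 (u0 w)
    -- corrected solution at the top level
    set v : Fin m → M (p + 1 + c₂) := fun j => u j + ∑ w, hgen w j • u1 w with hvdef
    have hv : v ∈ Sol (p + 1 + c₂) := by
      intro i
      calc ∑ j, k j i • v j
          = (∑ j, k j i • u j) + ∑ j, k j i • ∑ w, hgen w j • u1 w := by
            rw [← Finset.sum_add_distrib]
            exact Finset.sum_congr rfl fun j _ => smul_add _ _ _
        _ = (x i : ∀ kk, M kk) (p + 1 + c₂) := by rw [hu i, hET _ u1 i, add_zero]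
    refine ⟨fun j => pc f h5 (v j), ⟨v, hv, rfl⟩, ?_⟩
    intro j
    rw [pc_step f h5 (v j)]
    have hpr : pc f ((Nat.le_succ p).trans h5) (v j) = pc f h2 (pc f h1 (v j)) :=
      pc_trans f h2 h1 _ (v j)
    rw [hpr]
    have hv1 : pc f h1 (v j) = ub j + ∑ w, hgen w j • pc f h1 (u1 w) := by
      rw [hvdef]
      show pc f h1 (u j + ∑ w, hgen w j • u1 w) = _
      rw [map_add, map_sum]
      congr 1
      exact Finset.sum_congr rfl fun w _ => map_smul _ _ _
    rw [hv1, map_add, map_sum]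
    have hv2 : ∑ w, pc f h2 (hgen w j • pc f h1 (u1 w)) = ∑ w, hgen w j • u0 w := by
      refine Finset.sum_congr rfl fun w _ => ?_
      rw [map_smul]
      congr 1
      rw [← pc_trans f h2 h1 h3 (u1 w)]
      exact hu1 w
    rw [hv2, ← hu0 j, ← map_add]
    have : ub j + (t j - ub j) = t j := by abel
    rw [this]
    exact congrFun htz j
  -- build a compatible sequence of solutions
  let T : ∀ p : ℕ, {z : Fin m → M p // z ∈ Good p} := fun p =>
    Nat.rec ⟨(goodNE 0).choose, (goodNE 0).choose_spec⟩
      (fun p zp => ⟨(goodStep p zp.1 zp.2).choose, (goodStep p zp.1 zp.2).choose_spec.1⟩) p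
  have hT : ∀ (p : ℕ) (j : Fin m), f p ((T (p + 1)).1 j) = (T p).1 j := by
    intro p j
    exact (goodStep p (T p).1 (T p).2).choose_spec.2 j
  let yv : Fin m → N := fun j => ⟨fun p => (T p).1 j, fun p => hT p j⟩
  refine ⟨m, fun i j => k j i, yv, ?_, ?_⟩
  · intro i
    apply Subtype.ext
    have hs : ((∑ j, k j i • yv j : N) : ∀ kk, M kk) = ∑ j, k j i • (yv j : ∀ kk, M kk) := by
      rw [show ((∑ j, k j i • yv j : N) : ∀ kk, M kk) = N.subtype (∑ j, k j i • yv j) from rfl,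
        map_sum]
      rfl
    rw [hs]
    funext p
    rw [Finset.sum_apply]
    have := goodSol p (T p).1 (T p).2 i
    exact this.symm
  · intro j
    show ∑ i, b i * k j i = 0
    have h1 : k j ∈ LinearMap.ker g := by
      rw [← hk]
      exact Submodule.subset_span (Set.mem_range_self j)
    exact LinearMap.mem_ker.mp h1
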